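/- Proposition (wuc games, first part): In a weakly unilaterally competitive bimatrix game Γ, the leader's payoff at any subgame perfect equilibrium of the commitment game equals his commitment value, which equals his matrix game value: v_A = α^L = α^H. -/

import Mathlib

open Matrix

noncomputable section

/-- The set of mixed strategies: the standard simplex in `ℝ^m`. -/
def Simp (m : ℕ) : Set (Fin m → ℝ) := stdSimplex ℝ (Fin m)

/-- Bilinear payoff `xᵀ A y`. -/
def pay {m n : ℕ} (A : Matrix (Fin m) (Fin n) ℝ) (x : Fin m → ℝ) (y : Fin n → ℝ) : ℝ :=
  x ⬝ᵥ A.mulVec y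

/-- Payoff of a mixed strategy `x` against the pure strategy `j`: `α(x, e_j) = (xᵀA)_j`. -/
def purePay {m n : ℕ} (A : Matrix (Fin m) (Fin n) ℝ) (x : Fin m → ℝ) (j : Fin n) : ℝ :=
  Matrix.vecMul x A j

/-- Pure best replies of player II against `x`. -/
def BRII {m n : ℕ} (B : Matrix (Fin m) (Fin n) ℝ) (x : Fin m → ℝ) : Set (Fin n) :=
  {j | ∀ k, purePay B x k ≤ purePay B x j}

/-- Best-reply region `X(j)` of column `j`. -/
def XReg {m n : ℕ} (B : Matrix (Fin m) (Fin n) ℝ) (j : Fin n) : Set (Fin m → ℝ) :=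
  {x ∈ Simp m | j ∈ BRII B x}

/-- `D`: columns whose best-reply region has a fully mixed point. -/
def Dset {m n : ℕ} (B : Matrix (Fin m) (Fin n) ℝ) : Set (Fin n) :=
  {j | ∃ x ∈ XReg B j, ∀ i, 0 < x i}

/-- `E(j)`: columns of `B` payoff-equivalent to column `j`. -/
def Ecols {m n : ℕ} (B : Matrix (Fin m) (Fin n) ℝ) (j : Fin n) : Set (Fin n) :=
  {k | ∀ i, B i k = B i j}

/-- `min_j α(x, e_j)`. -/
def minPure {m n : ℕ} (A : Matrix (Fin m) (Fin n) ℝ) (x : Fin m → ℝ) : ℝ :=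
  sInf {w | ∃ j, w = purePay A x j}

/-- `max_j α(x, e_j)`. -/
def maxPure {m n : ℕ} (A : Matrix (Fin m) (Fin n) ℝ) (x : Fin m → ℝ) : ℝ :=
  sSup {w | ∃ j, w = purePay A x j}

/-- `max_{j ∈ BR_II(x)} α(x, e_j)`. -/
def maxBR {m n : ℕ} (A B : Matrix (Fin m) (Fin n) ℝ) (x : Fin m → ℝ) : ℝ :=
  sSup {w | ∃ j ∈ BRII B x, w = purePay A x j}

/-- Matrix game value `v_A = max_{x ∈ X} min_j α(x, e_j)`. -/
def matVal {m n : ℕ} (A : Matrix (Fin m) (Fin n) ℝ) : ℝ :=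
  sSup {v | ∃ x ∈ Simp m, v = minPure A x}

/-- `min_{k ∈ E(j)} α(x, e_k)`. -/
def minE {m n : ℕ} (A B : Matrix (Fin m) (Fin n) ℝ) (j : Fin n) (x : Fin m → ℝ) : ℝ :=
  sInf {w | ∃ k ∈ Ecols B j, w = purePay A x k}

/-- Commitment value `α^L = max_{j∈D} max_{x∈X(j)} min_{k∈E(j)} α(x,e_k)`. -/
def alphaL {m n : ℕ} (A B : Matrix (Fin m) (Fin n) ℝ) : ℝ :=
  sSup {v | ∃ j ∈ Dset B, ∃ x ∈ XReg B j, v = minE A B j x}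

/-- Highest leader payoff `α^H = max_{j : X(j)≠∅} max_{x∈X(j)} α(x,e_j)`. -/
def alphaH {m n : ℕ} (A B : Matrix (Fin m) (Fin n) ℝ) : ℝ :=
  sSup {v | ∃ j, ∃ x ∈ XReg B j, v = purePay A x j}

/-- Commitment optimal strategies of the leader (player I). -/
def XLset {m n : ℕ} (A B : Matrix (Fin m) (Fin n) ℝ) : Set (Fin m → ℝ) :=
  {x | ∃ j ∈ Dset B, x ∈ XReg B j ∧ minE A B j x = alphaL A B}

/-- Non-degeneracy for player I: no mixed strategy of player I has more pure best
replies (among player II's pure strategies) than the size of its support. -/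
def NondegFor {m n : ℕ} (B : Matrix (Fin m) (Fin n) ℝ) : Prop :=
  ∀ x ∈ Simp m, (BRII B x).ncard ≤ {i | x i ≠ 0}.ncard

/-- Nash equilibrium of the bimatrix game `(A,B)`. -/
def isNE {m n : ℕ} (A B : Matrix (Fin m) (Fin n) ℝ) (x : Fin m → ℝ) (y : Fin n → ℝ) : Prop :=
  x ∈ Simp m ∧ y ∈ Simp n ∧
  (∀ x' ∈ Simp m, pay A x' y ≤ pay A x y) ∧
  (∀ y' ∈ Simp n, pay B x y' ≤ pay B x y)

/-- Strategies of player I appearing in some Nash equilibrium. -/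
def NEX {m n : ℕ} (A B : Matrix (Fin m) (Fin n) ℝ) : Set (Fin m → ℝ) :=
  {x | ∃ y, isNE A B x y}

/-- Strategies of player II appearing in some Nash equilibrium. -/
def NEY {m n : ℕ} (A B : Matrix (Fin m) (Fin n) ℝ) : Set (Fin n → ℝ) :=
  {y | ∃ x, isNE A B x y}

/-- Weakly unilaterally competitive bimatrix game. -/
def WUC {m n : ℕ} (A B : Matrix (Fin m) (Fin n) ℝ) : Prop :=
  (∀ x₁ ∈ Simp m, ∀ x₂ ∈ Simp m, ∀ y ∈ Simp n,
    (pay A x₁ y > pay A x₂ y → pay B x₁ y ≤ pay B x₂ y) ∧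
    (pay A x₁ y = pay A x₂ y → pay B x₁ y = pay B x₂ y)) ∧
  (∀ y₁ ∈ Simp n, ∀ y₂ ∈ Simp n, ∀ x ∈ Simp m,
    (pay B x y₁ > pay B x y₂ → pay A x y₁ ≤ pay A x y₂) ∧
    (pay B x y₁ = pay B x y₂ → pay A x y₁ = pay A x y₂))

-- ### auxiliary lemmas

lemma purePay_eq {m n : ℕ} (A : Matrix (Fin m) (Fin n) ℝ) (x : Fin m → ℝ) (j : Fin n) :
    purePay A x j = ∑ i, x i * A i j := by
  simp [purePay, Matrix.vecMul, dotProduct]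

lemma pay_single {m n : ℕ} (A : Matrix (Fin m) (Fin n) ℝ) (x : Fin m → ℝ) (j : Fin n) :
    pay A x (Pi.single j 1) = purePay A x j := by
  simp [pay, purePay, Matrix.mulVec, Matrix.vecMul, dotProduct, Pi.single_apply,
    mul_ite, Finset.sum_ite_eq']

lemma single_mem_simp {n : ℕ} (j : Fin n) : Pi.single j 1 ∈ Simp n := by
  constructor
  · intro k; by_cases h : k = j <;> simp [Pi.single_apply, h]
  · simp [Pi.single_apply]

lemma purePay_smul_add {m n : ℕ} (A : Matrix (Fin m) (Fin n) ℝ) (x u : Fin m → ℝ) (a b : ℝ)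
    (k : Fin n) : purePay A (a • x + b • u) k = a * purePay A x k + b * purePay A u k := by
  simp [purePay_eq, Finset.mul_sum, Finset.sum_add_distrib, add_mul, mul_assoc]

lemma purePay_le_bound {m n : ℕ} (A : Matrix (Fin m) (Fin n) ℝ) {x : Fin m → ℝ}
    (hx : x ∈ Simp m) (j : Fin n) : purePay A x j ≤ ∑ i, ∑ k, |A i k| := by
  rw [purePay_eq]
  calc ∑ i, x i * A i j ≤ ∑ i, |A i j| := by
        apply Finset.sum_le_sum; intro i _
        calc x i * A i j ≤ x i * |A i j| := by
              exact mul_le_mul_of_nonneg_left (le_abs_self _) (hx.1 i)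
          _ ≤ 1 * |A i j| := by
              apply mul_le_mul_of_nonneg_right _ (abs_nonneg _)
              calc x i ≤ ∑ i', x i' :=
                    Finset.single_le_sum (f := fun i' => x i') (fun i' _ => hx.1 i')
                      (Finset.mem_univ i)
                _ = 1 := hx.2
          _ = |A i j| := one_mul _
    _ ≤ ∑ i, ∑ k, |A i k| := by
        apply Finset.sum_le_sum; intro i _
        exact Finset.single_le_sum (f := fun k => |A i k|) (fun k _ => abs_nonneg _)
          (Finset.mem_univ j)

lemma minPure_set_finite {m n : ℕ} (A : Matrix (Fin m) (Fin n) ℝ) (x : Fin m → ℝ) :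
    {w | ∃ j, w = purePay A x j}.Finite := by
  have : {w | ∃ j, w = purePay A x j} = Set.range (purePay A x) := by
    ext w; simp [eq_comm, Set.range]
  rw [this]; exact Set.finite_range _

lemma minE_set_finite {m n : ℕ} (A B : Matrix (Fin m) (Fin n) ℝ) (j : Fin n) (x : Fin m → ℝ) :
    {w | ∃ k ∈ Ecols B j, w = purePay A x k}.Finite := by
  apply (minPure_set_finite A x).subset
  rintro w ⟨k, _, rfl⟩; exact ⟨k, rfl⟩

lemma minPure_le {m n : ℕ} (A : Matrix (Fin m) (Fin n) ℝ) (x : Fin m → ℝ) (j : Fin n) :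
    minPure A x ≤ purePay A x j :=
  csInf_le (minPure_set_finite A x).bddBelow ⟨j, rfl⟩

lemma le_minPure {m n : ℕ} [Nonempty (Fin n)] (A : Matrix (Fin m) (Fin n) ℝ) (x : Fin m → ℝ)
    {c : ℝ} (h : ∀ j, c ≤ purePay A x j) : c ≤ minPure A x := by
  refine le_csInf ⟨purePay A x (Classical.arbitrary (Fin n)), ⟨Classical.arbitrary (Fin n), rfl⟩⟩ ?_
  rintro w ⟨j, rfl⟩; exact h j

lemma minE_le {m n : ℕ} (A B : Matrix (Fin m) (Fin n) ℝ) (j : Fin n) (x : Fin m → ℝ) :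
    minE A B j x ≤ purePay A x j :=
  csInf_le (minE_set_finite A B j x).bddBelow ⟨j, fun _ => rfl, rfl⟩

lemma minPure_le_minE {m n : ℕ} (A B : Matrix (Fin m) (Fin n) ℝ) (j : Fin n) (x : Fin m → ℝ) :
    minPure A x ≤ minE A B j x := by
  refine le_csInf ⟨purePay A x j, ⟨j, fun _ => rfl, rfl⟩⟩ ?_
  rintro w ⟨k, _, rfl⟩; exact minPure_le A x k

lemma exists_br {m n : ℕ} [Nonempty (Fin n)] (B : Matrix (Fin m) (Fin n) ℝ) (x : Fin m → ℝ) :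
    ∃ j, j ∈ BRII B x := by
  obtain ⟨j, hj⟩ := Finite.exists_max (purePay B x)
  exact ⟨j, hj⟩

lemma uniform_mem_simp {m : ℕ} (hm : 0 < m) : (fun _ : Fin m => (m : ℝ)⁻¹) ∈ Simp m := by
  constructor
  · intro i; positivity
  · simp [Finset.sum_const, Finset.card_univ]
    field_simp


/-- in a weakly unilaterally competitive game, the leader's payoff at any
subgame perfect equilibrium equals his commitment value, which equals his matrix game
value: `v_A = α^L = α^H`. -/
theorem stmt8 {m n : ℕ} (A B : Matrix (Fin m) (Fin n) ℝ) (hwuc : WUC A B) :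
    matVal A = alphaL A B ∧ alphaL A B = alphaH A B := by
  rcases Nat.eq_zero_or_pos m with hm | hm
  · -- m = 0 : everything is sSup ∅ = 0
    subst hm
    have hs : ∀ x : Fin 0 → ℝ, x ∉ Simp 0 := by
      rintro x ⟨-, hsum⟩; simp at hsum
    have e1 : {v | ∃ x ∈ Simp 0, v = minPure A x} = (∅ : Set ℝ) := by
      ext v; simp only [Set.mem_setOf_eq, Set.mem_empty_iff_false, iff_false]
      rintro ⟨x, hx, -⟩; exact hs x hx
    have e2 : {v | ∃ j ∈ Dset B, ∃ x ∈ XReg B j, v = minE A B j x} = (∅ : Set ℝ) := by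
      ext v; simp only [Set.mem_setOf_eq, Set.mem_empty_iff_false, iff_false]
      rintro ⟨j, -, x, hx, -⟩; exact hs x hx.1
    have e3 : {v | ∃ j, ∃ x ∈ XReg B j, v = purePay A x j} = (∅ : Set ℝ) := by
      ext v; simp only [Set.mem_setOf_eq, Set.mem_empty_iff_false, iff_false]
      rintro ⟨j, x, hx, -⟩; exact hs x hx.1
    rw [matVal, alphaL, alphaH, e1, e2, e3]
    simp [Real.sSup_empty]
  rcases Nat.eq_zero_or_pos n with hn | hn
  · -- n = 0
    subst hn
    have e1 : {v | ∃ x ∈ Simp m, v = minPure A x} = {(0 : ℝ)} := by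
      ext v
      simp only [Set.mem_setOf_eq, Set.mem_singleton_iff]
      constructor
      · rintro ⟨x, -, rfl⟩
        have : {w | ∃ j : Fin 0, w = purePay A x j} = (∅ : Set ℝ) := by
          ext w; simp [Fin.isEmpty]
        rw [minPure, this, Real.sInf_empty]
      · rintro rfl
        refine ⟨fun _ => (m : ℝ)⁻¹, uniform_mem_simp hm, ?_⟩
        have : {w | ∃ j : Fin 0, w = purePay A (fun _ => (m:ℝ)⁻¹) j} = (∅ : Set ℝ) := by
          ext w; simp [Fin.isEmpty]
        rw [minPure, this, Real.sInf_empty]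
    have e2 : {v | ∃ j ∈ Dset B, ∃ x ∈ XReg B j, v = minE A B j x} = (∅ : Set ℝ) := by
      ext v; simp only [Set.mem_setOf_eq, Set.mem_empty_iff_false, iff_false]
      rintro ⟨j, -⟩; exact j.elim0
    have e3 : {v | ∃ j : Fin 0, ∃ x ∈ XReg B j, v = purePay A x j} = (∅ : Set ℝ) := by
      ext v; simp only [Set.mem_setOf_eq, Set.mem_empty_iff_false, iff_false]
      rintro ⟨j, -⟩; exact j.elim0
    rw [matVal, alphaL, alphaH, e1, e2, e3]
    simp [Real.sSup_empty]
  -- main case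
  haveI : Nonempty (Fin m) := Fin.pos_iff_nonempty.mp hm
  haveI : Nonempty (Fin n) := Fin.pos_iff_nonempty.mp hn
  set C := ∑ i, ∑ k, |A i k| with hC
  set u : Fin m → ℝ := fun _ => (m : ℝ)⁻¹ with hu
  have hum : u ∈ Simp m := uniform_mem_simp hm
  have hupos : ∀ i, 0 < u i := fun i => by positivity
  obtain ⟨j₀, hj₀⟩ := exists_br B u
  have hmemD : j₀ ∈ Dset B := ⟨u, ⟨hum, hj₀⟩, hupos⟩
  -- bounded-above facts
  have bddH : BddAbove {v | ∃ j, ∃ x ∈ XReg B j, v = purePay A x j} := by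
    refine ⟨C, ?_⟩; rintro v ⟨j, x, hx, rfl⟩; exact purePay_le_bound A hx.1 j
  have bddL : BddAbove {v | ∃ j ∈ Dset B, ∃ x ∈ XReg B j, v = minE A B j x} := by
    refine ⟨C, ?_⟩; rintro v ⟨j, -, x, hx, rfl⟩
    exact (minE_le A B j x).trans (purePay_le_bound A hx.1 j)
  have bddV : BddAbove {v | ∃ x ∈ Simp m, v = minPure A x} := by
    refine ⟨C, ?_⟩; rintro v ⟨x, hx, rfl⟩
    exact (minPure_le A x (Classical.arbitrary _)).trans
      (purePay_le_bound A hx (Classical.arbitrary _))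
  have neL : {v | ∃ j ∈ Dset B, ∃ x ∈ XReg B j, v = minE A B j x}.Nonempty :=
    ⟨minE A B j₀ u, j₀, hmemD, u, ⟨hum, hj₀⟩, rfl⟩
  have neH : {v | ∃ j, ∃ x ∈ XReg B j, v = purePay A x j}.Nonempty :=
    ⟨purePay A u j₀, j₀, u, ⟨hum, hj₀⟩, rfl⟩
  have neV : {v | ∃ x ∈ Simp m, v = minPure A x}.Nonempty := ⟨minPure A u, u, hum, rfl⟩
  -- (1) α^H ≤ v_A   (uses wuc)
  have h3 : alphaH A B ≤ matVal A := by
    apply csSup_le neH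
    rintro v ⟨j, x, ⟨hxS, hxBR⟩, rfl⟩
    have key : ∀ k, purePay A x j ≤ purePay A x k := by
      intro k
      have hb := hxBR k
      have h2 := hwuc.2 (Pi.single j 1) (single_mem_simp j) (Pi.single k 1) (single_mem_simp k)
        x hxS
      rw [pay_single, pay_single, pay_single, pay_single] at h2
      rcases lt_or_eq_of_le hb with hlt | heq
      · exact h2.1 hlt
      · exact le_of_eq (h2.2 heq.symm)
    have h4 : purePay A x j ≤ minPure A x := le_minPure A x key
    exact h4.trans (le_csSup bddV ⟨x, hxS, rfl⟩)
  -- (2) α^L ≤ α^H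
  have h2 : alphaL A B ≤ alphaH A B := by
    apply csSup_le neL
    rintro v ⟨j, -, x, hx, rfl⟩
    exact (minE_le A B j x).trans (le_csSup bddH ⟨j, x, hx, rfl⟩)
  -- (3) v_A ≤ α^L
  have h1 : matVal A ≤ alphaL A B := by
    apply csSup_le neV
    rintro v ⟨x, hxS, rfl⟩
    set a := minPure A x with ha
    set b := minPure A u with hb
    have claim : ∀ ε : ℝ, 0 < ε → ε ≤ 1 → (1 - ε) * a + ε * b ≤ alphaL A B := by
      intro ε hε0 hε1
      set xe : Fin m → ℝ := (1 - ε) • x + ε • u with hxe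
      have hxeS : xe ∈ Simp m :=
        (convex_stdSimplex ℝ (Fin m)) hxS hum (by linarith) hε0.le (by ring)
      have hxepos : ∀ i, 0 < xe i := by
        intro i
        have h1 : 0 ≤ (1 - ε) * x i := mul_nonneg (by linarith) (hxS.1 i)
        have h2 : 0 < ε * u i := mul_pos hε0 (hupos i)
        simp only [hxe, Pi.add_apply, Pi.smul_apply, smul_eq_mul]
        linarith
      obtain ⟨j, hj⟩ := exists_br B xe
      have hmem : minE A B j xe ∈ {v | ∃ j ∈ Dset B, ∃ x ∈ XReg B j, v = minE A B j x} :=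
        ⟨j, ⟨xe, ⟨hxeS, hj⟩, hxepos⟩, xe, ⟨hxeS, hj⟩, rfl⟩
      have hle : minE A B j xe ≤ alphaL A B := le_csSup bddL hmem
      have hge : (1 - ε) * a + ε * b ≤ minPure A xe := by
        apply le_minPure
        intro k
        rw [hxe, purePay_smul_add]
        have := minPure_le A x k
        have := minPure_le A u k
        have h1 : (1 - ε) * a ≤ (1 - ε) * purePay A x k :=
          mul_le_mul_of_nonneg_left (minPure_le A x k) (by linarith)
        have h2 : ε * b ≤ ε * purePay A u k :=
          mul_le_mul_of_nonneg_left (minPure_le A u k) hε0.le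
        linarith
      linarith [minPure_le_minE A B j xe, hge, hle]
    by_contra hlt
    push_neg at hlt
    set d := a - alphaL A B with hd
    have hd0 : 0 < d := by simp [hd]; linarith
    set M := |a - b| + 1 with hM
    have hM0 : 0 < M := by positivity
    set ε := min 1 (d / (2 * M)) with hε
    have hε0 : 0 < ε := lt_min one_pos (by positivity)
    have hε1 : ε ≤ 1 := min_le_left _ _
    have hεM : ε ≤ d / (2 * M) := min_le_right _ _
    have hcl := claim ε hε0 hε1
    have hab : a - b ≤ M := by
      have := le_abs_self (a - b); linarith
    have e1 : d ≤ ε * (a - b) := by nlinarith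
    have e2 : ε * (a - b) ≤ ε * M := mul_le_mul_of_nonneg_left hab hε0.le
    have e3 : ε * M ≤ d / (2 * M) * M := mul_le_mul_of_nonneg_right hεM hM0.le
    have e4 : d / (2 * M) * M = d / 2 := by field_simp
    have e5 : d ≤ d / 2 := e1.trans (e2.trans (e3.trans (le_of_eq e4)))
    linarith
  exact ⟨le_antisymm h1 (h2.trans h3), le_antisymm h2 (h3.trans h1)⟩
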